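/- Let T be an open convex cone with basepoint b, x ∈ ∂T, y ∈ T, and y_λ := (1−λ)x + λy for λ ∈ (0,1). Then as λ → 0, the functions F_T(·, y_λ) − F_T(b, y_λ) converge pointwise on T to the restriction to T of the Funk horofunction f_{τ(T,x),y} of the tangent cone, where f_{S,p}(z) := F_S(z,p) − F_S(b,p). -/

import Mathlib

open Set Filter Topology

variable {V : Type*} [NormedAddCommGroup V] [NormedSpace ℝ V] [FiniteDimensional ℝ V]

/-- An open cone: non-empty, open, convex, invariant under positive scaling, not containing 0. -/
def IsOpenCone (T : Set V) : Prop :=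
  T.Nonempty ∧ IsOpen T ∧ Convex ℝ T ∧ (∀ c : ℝ, 0 < c → ∀ u ∈ T, c • u ∈ T) ∧ (0 : V) ∉ T

/-- The gauge `M_T(y/x) = inf {λ > 0 : λ • x - y ∈ closure T}`. -/
noncomputable def funkM (T : Set V) (y x : V) : ℝ :=
  sInf {l : ℝ | 0 < l ∧ l • x - y ∈ closure T}

/-- The Funk metric `F_T(x,y) = log inf {λ > 0 : λ • y - x ∈ closure T}`. -/
noncomputable def funkF (T : Set V) (x y : V) : ℝ := Real.log (funkM T x y)

/-- The reverse Funk metric `r_T(x,y) = F_T(y,x)`. -/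
noncomputable def revF (T : Set V) (x y : V) : ℝ := Real.log (funkM T y x)

/-- The Hilbert metric as the symmetrisation of the Funk metric. -/
noncomputable def hilD (T : Set V) (x y : V) : ℝ := funkF T x y + revF T x y

/-- The dual cone, as a set of continuous linear functionals. -/
def dualCone (T : Set V) : Set (V →L[ℝ] ℝ) := {z | ∀ u ∈ T, 0 ≤ z u}

/-- The open tangent cone `τ(T,x) = {λ (w - x) : λ > 0, w ∈ T}`. -/
def openTangent (T : Set V) (x : V) : Set V :=
  {v | ∃ l : ℝ, 0 < l ∧ ∃ w ∈ T, v = l • (w - x)}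

section auxiliary

set_option linter.unusedSectionVars false

open Pointwise

variable {T S : Set V} {x : V}

lemma aux_smul_closure (hT : IsOpenCone T) {c : ℝ} (hc : 0 < c) {u : V} (hu : u ∈ closure T) :
    c • u ∈ closure T :=
  map_mem_closure (continuous_const_smul c) hu (fun a ha => hT.2.2.2.1 c hc a ha)

lemma aux_zero_mem_closure (hT : IsOpenCone T) : (0 : V) ∈ closure T := by
  obtain ⟨p, hp⟩ := hT.1
  have h : Tendsto (fun ε : ℝ => ε • p) (𝓝[>] 0) (𝓝 (0 : V)) := by
    have : Tendsto (fun ε : ℝ => ε • p) (𝓝 0) (𝓝 ((0:ℝ) • p)) :=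
      (continuous_id.smul continuous_const).tendsto 0
    rw [zero_smul] at this
    exact this.mono_left nhdsWithin_le_nhds
  refine mem_closure_of_tendsto h ?_
  filter_upwards [self_mem_nhdsWithin] with ε (hε : 0 < ε)
  exact hT.2.2.2.1 ε hε p hp

lemma aux_smul_closure' (hT : IsOpenCone T) {c : ℝ} (hc : 0 ≤ c) {u : V} (hu : u ∈ closure T) :
    c • u ∈ closure T := by
  rcases hc.lt_or_eq with h | h
  · exact aux_smul_closure hT h hu
  · rw [← h, zero_smul]; exact aux_zero_mem_closure hT

lemma aux_add_closure (hT : IsOpenCone T) {u v : V} (hu : u ∈ closure T) (hv : v ∈ closure T) :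
    u + v ∈ closure T := by
  have h2 : ((1:ℝ)/2) • u + ((1:ℝ)/2) • v ∈ closure T :=
    hT.2.2.1.closure hu hv (by norm_num) (by norm_num) (by norm_num)
  have := aux_smul_closure hT (by norm_num : (0:ℝ) < 2) h2
  convert this using 1
  module

lemma aux_mem_add_closure (hT : IsOpenCone T) {z u : V} (hz : z ∈ T) (hu : u ∈ closure T) :
    z + u ∈ T := by
  have hz' : z ∈ interior T := by rwa [hT.2.1.interior_eq]
  have h2 : ((1:ℝ)/2) • z + ((1:ℝ)/2) • u ∈ interior T :=
    hT.2.2.1.combo_interior_closure_mem_interior hz' hu (by norm_num) (by norm_num) (by norm_num)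
  rw [hT.2.1.interior_eq] at h2
  have := hT.2.2.2.1 2 (by norm_num) _ h2
  convert this using 1
  module

lemma aux_combo_mem (hT : IsOpenCone T) {x y : V} (hx : x ∈ closure T) (hy : y ∈ T)
    {a : ℝ} (ha : 0 < a) (ha1 : a ≤ 1) : (1 - a) • x + a • y ∈ T := by
  have hy' : y ∈ interior T := by rwa [hT.2.1.interior_eq]
  have h := hT.2.2.1.combo_interior_closure_mem_interior hy' hx ha
    (by linarith : (0:ℝ) ≤ 1 - a) (by ring)
  rw [hT.2.1.interior_eq] at h
  rwa [add_comm]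

lemma mem_tangent_iff {v : V} :
    v ∈ openTangent T x ↔ ∃ ε : ℝ, 0 < ε ∧ x + ε • v ∈ T := by
  constructor
  · rintro ⟨l, hl, w, hw, rfl⟩
    refine ⟨l⁻¹, inv_pos.2 hl, ?_⟩
    rw [smul_smul, inv_mul_cancel₀ hl.ne', one_smul]
    simpa using hw
  · rintro ⟨ε, hε, hmem⟩
    exact ⟨ε⁻¹, inv_pos.2 hε, x + ε • v, hmem, by
      rw [add_sub_cancel_left, smul_smul, inv_mul_cancel₀ hε.ne', one_smul]⟩

lemma subset_tangent (hT : IsOpenCone T) (hx : x ∈ closure T) : T ⊆ openTangent T x := by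
  intro w hw
  rw [mem_tangent_iff]
  exact ⟨1, one_pos, by rw [one_smul, add_comm]; exact aux_mem_add_closure hT hw hx⟩

lemma tangent_down (hT : IsOpenCone T) (hx : x ∈ closure T) {v : V} {ε ε₀ : ℝ}
    (hε : 0 < ε) (hle : ε ≤ ε₀) (h : x + ε₀ • v ∈ T) : x + ε • v ∈ T := by
  have hε₀ : 0 < ε₀ := hε.trans_le hle
  have ha : 0 < ε / ε₀ := div_pos hε hε₀
  have ha1 : ε / ε₀ ≤ 1 := (div_le_one hε₀).2 hle
  have := aux_combo_mem hT hx h ha ha1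
  convert this using 1
  have hne : ε₀ ≠ 0 := hε₀.ne'
  rw [smul_add, smul_smul, div_mul_cancel₀ _ hne]
  module

lemma tangent_isOpenCone (hT : IsOpenCone T) (hx : x ∈ closure T) (hxT : x ∉ T) :
    IsOpenCone (openTangent T x) := by
  obtain ⟨p, hp⟩ := hT.1
  refine ⟨⟨p - x, 1, one_pos, p, hp, (one_smul _ _).symm⟩, ?_, ?_, ?_, ?_⟩
  · rw [isOpen_iff_mem_nhds]
    rintro v hv
    rw [mem_tangent_iff] at hv
    obtain ⟨ε, hε, hmem⟩ := hv
    have hcont : Continuous fun u : V => x + ε • u :=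
      continuous_const.add (continuous_const_smul ε)
    have hopen : IsOpen ((fun u : V => x + ε • u) ⁻¹' T) := hT.2.1.preimage hcont
    refine mem_of_superset (hopen.mem_nhds hmem) ?_
    intro u hu
    exact mem_tangent_iff.2 ⟨ε, hε, hu⟩
  · intro v₁ hv₁ v₂ hv₂ a b ha hb hab
    rcases ha.lt_or_eq with ha' | ha'
    · rcases hb.lt_or_eq with hb' | hb'
      · rw [mem_tangent_iff] at hv₁ hv₂ ⊢
        obtain ⟨ε₁, hε₁, h₁⟩ := hv₁
        obtain ⟨ε₂, hε₂, h₂⟩ := hv₂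
        have hε : 0 < min ε₁ ε₂ := lt_min hε₁ hε₂
        have h₁' := tangent_down hT hx hε (min_le_left _ _) h₁
        have h₂' := tangent_down hT hx hε (min_le_right _ _) h₂
        refine ⟨min ε₁ ε₂, hε, ?_⟩
        have key : x + (min ε₁ ε₂) • (a • v₁ + b • v₂)
            = a • (x + (min ε₁ ε₂) • v₁) + b • (x + (min ε₁ ε₂) • v₂) := by
          have hb' : b = 1 - a := by linarith
          subst hb'
          module
        rw [key]
        exact hT.2.2.1 h₁' h₂' ha hb hab
      · rw [← hb']
        have : a = 1 := by linarith
        simpa [this] using hv₁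
    · rw [← ha']
      have : b = 1 := by linarith
      simpa [this] using hv₂
  · rintro c hc u ⟨l, hl, w, hw, rfl⟩
    exact ⟨c * l, mul_pos hc hl, w, hw, by rw [smul_smul]⟩
  · intro h0
    rw [mem_tangent_iff] at h0
    obtain ⟨ε, hε, h⟩ := h0
    rw [smul_zero, add_zero] at h
    exact hxT h

lemma tangent_sub_smul (hT : IsOpenCone T) (hx : x ∈ closure T) {v : V} {t : ℝ}
    (hv : v ∈ openTangent T x) (ht : 0 ≤ t) : v - t • x ∈ openTangent T x := by
  rw [mem_tangent_iff] at hv ⊢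
  obtain ⟨ε₀, hε₀, h₀⟩ := hv
  set ε : ℝ := ε₀ / (1 + ε₀ * t) with hεdef
  have hden : 0 < 1 + ε₀ * t := by positivity
  have hε : 0 < ε := div_pos hε₀ hden
  refine ⟨ε, hε, ?_⟩
  have hcoef : 1 - ε * t = 1 / (1 + ε₀ * t) := by
    rw [hεdef]; field_simp; ring
  have hcoef2 : (1 - ε * t) * ε₀ = ε := by
    rw [hcoef, hεdef]; field_simp
  have hcoefpos : 0 < 1 - ε * t := by rw [hcoef]; positivity
  have key : x + ε • (v - t • x) = (1 - ε * t) • (x + ε₀ • v) := by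
    rw [smul_add, smul_smul, hcoef2]
    module
  rw [key]
  exact hT.2.2.2.1 _ hcoefpos _ h₀

lemma tangent_sub_smul_closure (hT : IsOpenCone T) (hx : x ∈ closure T) {v : V} {t : ℝ}
    (hv : v ∈ closure (openTangent T x)) (ht : 0 ≤ t) :
    v - t • x ∈ closure (openTangent T x) := by
  have hcont : Continuous fun u : V => u - t • x := continuous_id.sub continuous_const
  exact map_mem_closure (f := fun u : V => u - t • x) hcont hv
    (fun a ha => tangent_sub_smul hT hx ha ht)

lemma mset_bddBelow (S : Set V) (z p : V) :
    BddBelow {l : ℝ | 0 < l ∧ l • p - z ∈ closure S} :=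
  ⟨0, fun l hl => hl.1.le⟩

lemma mset_nonempty (hS : IsOpenCone S) {p : V} (hp : p ∈ S) (z : V) :
    {l : ℝ | 0 < l ∧ l • p - z ∈ closure S}.Nonempty := by
  obtain ⟨δ, hδ, hball⟩ := Metric.isOpen_iff.1 hS.2.1 p hp
  set l : ℝ := ‖z‖ / δ + 1 with hldef
  have hl : 0 < l := by positivity
  refine ⟨l, hl, subset_closure ?_⟩
  have hmem : p - l⁻¹ • z ∈ S := by
    apply hball
    rw [Metric.mem_ball, dist_eq_norm]
    have : p - l⁻¹ • z - p = -(l⁻¹ • z) := by abel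
    rw [this, norm_neg, norm_smul, Real.norm_eq_abs, abs_inv, abs_of_pos hl]
    rw [inv_mul_lt_iff₀ hl]
    calc ‖z‖ = (‖z‖ / δ) * δ := by field_simp
    _ < l * δ := by
        apply mul_lt_mul_of_pos_right _ hδ
        rw [hldef]; linarith
  have := hS.2.2.2.1 l hl _ hmem
  have heq : l • (p - l⁻¹ • z) = l • p - z := by
    rw [smul_sub, smul_smul, mul_inv_cancel₀ hl.ne', one_smul]
  rwa [heq] at this

lemma neg_not_mem_closure (hS : IsOpenCone S) {z : V} (hz : z ∈ S) : -z ∉ closure S := by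
  intro h
  have := aux_mem_add_closure hS hz h
  rw [add_neg_cancel] at this
  exact hS.2.2.2.2 this

lemma funkM_pos (hS : IsOpenCone S) {z p : V} (hz : z ∈ S) (hp : p ∈ S) :
    0 < funkM S z p := by
  have hnz : -z ∉ closure S := neg_not_mem_closure hS hz
  have hcl : IsClosed (closure S) := isClosed_closure
  obtain ⟨δ, hδ, hball⟩ := Metric.isOpen_iff.1 hcl.isOpen_compl (-z) hnz
  set δ' : ℝ := δ / (‖p‖ + 1) with hδ'def
  have hδ' : 0 < δ' := by positivity
  refine lt_of_lt_of_le hδ' (le_csInf (mset_nonempty hS hp z) ?_)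
  rintro l ⟨hl, hmem⟩
  by_contra hlt
  push_neg at hlt
  have hd : dist (l • p - z) (-z) < δ := by
    rw [dist_eq_norm]
    have : l • p - z - -z = l • p := by abel
    rw [this, norm_smul, Real.norm_eq_abs, abs_of_pos hl]
    calc l * ‖p‖ ≤ l * (‖p‖ + 1) := by nlinarith [norm_nonneg p]
    _ < δ' * (‖p‖ + 1) := by
        apply mul_lt_mul_of_pos_right hlt
        positivity
    _ = δ := by rw [hδ'def]; field_simp
  exact hball hd hmem

lemma funkM_mem_le (S : Set V) {z p : V} {m : ℝ} (hm : 0 < m)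
    (hmem : m • p - z ∈ closure S) : funkM S z p ≤ m :=
  csInf_le (mset_bddBelow S z p) ⟨hm, hmem⟩

lemma funkM_smul (S : Set V) (z p : V) {c : ℝ} (hc : 0 < c) :
    funkM S z (c • p) = c⁻¹ * funkM S z p := by
  have hset : {l : ℝ | 0 < l ∧ l • c • p - z ∈ closure S}
      = c⁻¹ • {l : ℝ | 0 < l ∧ l • p - z ∈ closure S} := by
    ext l
    constructor
    · rintro ⟨hl, hmem⟩
      refine ⟨l * c, ⟨mul_pos hl hc, by rwa [smul_smul] at hmem⟩, ?_⟩
      simp only [smul_eq_mul]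
      field_simp
    · rintro ⟨m, ⟨hm, hmem⟩, rfl⟩
      simp only [smul_eq_mul]
      refine ⟨by positivity, ?_⟩
      rw [smul_smul]
      have : c⁻¹ * m * c = m := by field_simp
      rwa [this]
  rw [funkM, funkM, hset, Real.sInf_smul_of_nonneg (by positivity), smul_eq_mul]

lemma key_tendsto (hT : IsOpenCone T) (hx : x ∈ closure T) (hxT : x ∉ T)
    {y z : V} (hy : y ∈ T) (hz : z ∈ T) :
    Tendsto (fun s : ℝ => funkM T z (y + s • x)) atTop
      (𝓝 (funkM (openTangent T x) z y)) := by
  set τ := openTangent T x with hτdef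
  have hτ : IsOpenCone τ := tangent_isOpenCone hT hx hxT
  have hTτ : T ⊆ τ := subset_tangent hT hx
  set L := funkM τ z y with hLdef
  have hL : 0 < L := funkM_pos hτ (hTτ hz) (hTτ hy)
  have hmemT : ∀ s : ℝ, 0 ≤ s → y + s • x ∈ T := fun s hs =>
    aux_mem_add_closure hT hy (aux_smul_closure' hT hs hx)
  have hlower : ∀ s : ℝ, 0 ≤ s → L ≤ funkM T z (y + s • x) := by
    intro s hs
    refine le_csInf (mset_nonempty hT (hmemT s hs) z) ?_
    rintro l ⟨hl, hmem⟩
    have h1 : l • (y + s • x) - z ∈ closure τ := closure_mono hTτ hmem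
    have h2 := tangent_sub_smul_closure hT hx h1 (mul_nonneg hl.le hs)
    have heq : l • (y + s • x) - z - (l * s) • x = l • y - z := by
      rw [smul_add, smul_smul]
      module
    rw [heq] at h2
    exact csInf_le (mset_bddBelow τ z y) ⟨hl, h2⟩
  have hupper : ∀ ε : ℝ, 0 < ε → ∃ s₀ : ℝ, ∀ s : ℝ, s₀ ≤ s →
      funkM T z (y + s • x) < L + ε := by
    intro ε hε
    obtain ⟨m, ⟨hm, hmem⟩, hmlt⟩ :=
      exists_lt_of_csInf_lt (mset_nonempty hτ (hTτ hy) z)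
        (show L < L + ε / 2 by linarith)
    set m' : ℝ := m + ε / 2 with hm'def
    have hm' : 0 < m' := by positivity
    have h1 : m' • y - z ∈ τ := by
      have heq : m' • y - z = (ε / 2) • y + (m • y - z) := by
        rw [hm'def]; module
      rw [heq]
      exact aux_mem_add_closure hτ (hτ.2.2.2.1 (ε / 2) (by positivity) y (hTτ hy)) hmem
    obtain ⟨ε₁, hε₁, hT1⟩ := mem_tangent_iff.1 h1
    have h2 : ε₁⁻¹ • x + (m' • y - z) ∈ T := by
      have := hT.2.2.2.1 ε₁⁻¹ (inv_pos.2 hε₁) _ hT1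
      rwa [smul_add, smul_smul, inv_mul_cancel₀ hε₁.ne', one_smul] at this
    refine ⟨ε₁⁻¹ / m', fun s hs => ?_⟩
    have hcoef : 0 ≤ m' * s - ε₁⁻¹ := by
      rw [div_le_iff₀ hm'] at hs
      nlinarith
    have h3 : m' • (y + s • x) - z ∈ closure T := by
      have heq : m' • (y + s • x) - z
          = (ε₁⁻¹ • x + (m' • y - z)) + (m' * s - ε₁⁻¹) • x := by
        rw [smul_add, smul_smul]
        module
      rw [heq]
      exact aux_add_closure hT (subset_closure h2) (aux_smul_closure' hT hcoef hx)
    calc funkM T z (y + s • x) ≤ m' := funkM_mem_le T hm' h3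
    _ < L + ε := by rw [hm'def]; linarith
  rw [tendsto_order]
  constructor
  · intro c hc
    filter_upwards [eventually_ge_atTop (0:ℝ)] with s hs
    exact lt_of_lt_of_le hc (hlower s hs)
  · intro c hc
    obtain ⟨s₀, hs₀⟩ := hupper (c - L) (by linarith)
    filter_upwards [eventually_ge_atTop s₀] with s hs
    have := hs₀ s hs
    linarith

end auxiliary

/-- along a segment toward `x ∈ ∂T`, the Funk distance-difference functions
converge pointwise on `T` to the Funk horofunction of the tangent cone `τ(T,x)`. -/
theorem funkF_tendsto_tangent_horofunction (T : Set V) (hT : IsOpenCone T)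
    (b : V) (hb : b ∈ T) (x : V) (hx : x ∈ frontier T) (y : V) (hy : y ∈ T) :
    ∀ w ∈ T, Tendsto (fun l : ℝ => funkF T w ((1 - l) • x + l • y)
        - funkF T b ((1 - l) • x + l • y)) (𝓝[>] (0 : ℝ))
      (𝓝 (funkF (openTangent T x) w y - funkF (openTangent T x) b y)) := by
  intro w hw
  set τ := openTangent T x with hτdef
  have hxc : x ∈ closure T := frontier_subset_closure hx
  have hxT : x ∉ T := fun h => hx.2 (by rwa [hT.2.1.interior_eq])
  have hτ : IsOpenCone τ := tangent_isOpenCone hT hxc hxT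
  have hTτ : T ⊆ τ := subset_tangent hT hxc
  -- s(l) = (1-l)/l tends to atTop
  have hst : Tendsto (fun l : ℝ => (1 - l) / l) (𝓝[>] (0:ℝ)) atTop := by
    have h1 : Tendsto (fun l : ℝ => l⁻¹ + (-1)) (𝓝[>] (0:ℝ)) atTop :=
      tendsto_atTop_add_const_right _ _ tendsto_inv_nhdsGT_zero
    refine h1.congr' ?_
    filter_upwards [self_mem_nhdsWithin] with l (hl : 0 < l)
    field_simp
    ring
  have hkw : Tendsto (fun l : ℝ => funkM T w (y + ((1 - l) / l) • x)) (𝓝[>] (0:ℝ))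
      (𝓝 (funkM τ w y)) := (key_tendsto hT hxc hxT hy hw).comp hst
  have hkb : Tendsto (fun l : ℝ => funkM T b (y + ((1 - l) / l) • x)) (𝓝[>] (0:ℝ))
      (𝓝 (funkM τ b y)) := (key_tendsto hT hxc hxT hy hb).comp hst
  have hlw : Tendsto (fun l : ℝ => Real.log (funkM T w (y + ((1 - l) / l) • x)))
      (𝓝[>] (0:ℝ)) (𝓝 (Real.log (funkM τ w y))) :=
    ((Real.continuousAt_log (funkM_pos hτ (hTτ hw) (hTτ hy)).ne').tendsto).comp hkw
  have hlb : Tendsto (fun l : ℝ => Real.log (funkM T b (y + ((1 - l) / l) • x)))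
      (𝓝[>] (0:ℝ)) (𝓝 (Real.log (funkM τ b y))) :=
    ((Real.continuousAt_log (funkM_pos hτ (hTτ hb) (hTτ hy)).ne').tendsto).comp hkb
  have hfinal := hlw.sub hlb
  refine hfinal.congr' ?_
  filter_upwards [Ioo_mem_nhdsGT_of_mem (show (0:ℝ) ∈ Ico (0:ℝ) 1 by simp)] with l hl
  obtain ⟨hl0, hl1⟩ := hl
  set s : ℝ := (1 - l) / l with hsdef
  have hs : 0 < s := div_pos (by linarith) hl0
  have hxy : (1 - l) • x + l • y = l • (y + s • x) := by
    rw [smul_add, smul_smul, hsdef]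
    have : l * ((1 - l) / l) = 1 - l := by field_simp
    rw [this]
    abel
  have hgw : 0 < funkM T w (y + s • x) :=
    funkM_pos hT hw (aux_mem_add_closure hT hy (aux_smul_closure hT hs hxc))
  have hgb : 0 < funkM T b (y + s • x) :=
    funkM_pos hT hb (aux_mem_add_closure hT hy (aux_smul_closure hT hs hxc))
  rw [hxy, funkF, funkF, funkM_smul T w _ hl0, funkM_smul T b _ hl0,
    Real.log_mul (by positivity : (l:ℝ)⁻¹ ≠ 0) hgw.ne',
    Real.log_mul (by positivity : (l:ℝ)⁻¹ ≠ 0) hgb.ne']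
  ring
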